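/- Let p_1, p_2, …, p_n be multivariate polynomials in d real variables and let p(x) = Π_{j=1}^n p_j(x) be their product. Then ‖p‖² ≤ n^{Σ_{j=1}^n deg(p_j)} · Π_{j=1}^n ‖p_j‖². -/

import Mathlib

open Finset


-- geometric sum bound
lemma geom_sum_le_pow (k m : ℕ) : ∑ b ∈ Finset.range (m+1), k^b ≤ (k+1)^m := by
  induction m with
  | zero => simp
  | succ m ih =>
    rw [Finset.sum_range_succ]
    have h1 : (k+1)^(m+1) = (k+1)^m + k*(k+1)^m := by ring
    have h2 : k^(m+1) ≤ k*(k+1)^m := by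
      rw [pow_succ, mul_comm]
      exact Nat.mul_le_mul_left k (Nat.pow_le_pow_left (Nat.le_succ k) m)
    omega

lemma card_finsuppAntidiag_nat_le {ι : Type*} [DecidableEq ι] (s : Finset ι) (m : ℕ) :
    (Finset.finsuppAntidiag s m).card ≤ s.card ^ m := by
  induction s using Finset.induction_on generalizing m with
  | empty =>
    rw [Finset.finsuppAntidiag_empty]
    split_ifs with h
    · subst h; simp
    · simp
  | @insert a s ha ih =>
    rw [Finset.finsuppAntidiag_insert ha]
    refine Finset.card_biUnion_le.trans ?_
    calc ∑ p ∈ Finset.HasAntidiagonal.antidiagonal m,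
          ((Finset.finsuppAntidiag s p.2).attach.map _).card
        ≤ ∑ p ∈ Finset.HasAntidiagonal.antidiagonal m, s.card ^ p.2 := by
          refine Finset.sum_le_sum fun p _ => ?_
          rw [Finset.card_map, Finset.card_attach]
          exact ih p.2
      _ = ∑ k ∈ Finset.range (m+1), s.card ^ (m - k) :=
          Finset.Nat.sum_antidiagonal_eq_sum_range_succ_mk _ m
      _ = ∑ k ∈ Finset.range (m+1), s.card ^ k := by
          rw [← Finset.sum_range_reflect]
          refine Finset.sum_congr rfl fun k hk => ?_
          simp only [Finset.mem_range] at hk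
          congr 1
          omega
      _ ≤ (s.card + 1) ^ m := geom_sum_le_pow _ m
      _ = (insert a s).card ^ m := by rw [Finset.card_insert_of_notMem ha]

lemma card_finsuppAntidiag_le {d n : ℕ} (β : Fin d →₀ ℕ) :
    (Finset.finsuppAntidiag (Finset.univ : Finset (Fin n)) β).card
      ≤ n ^ (∑ i : Fin d, β i) := by
  classical
  have hinj : ∀ l ∈ Finset.finsuppAntidiag (Finset.univ : Finset (Fin n)) β,
      (fun i => Finsupp.equivFunOnFinite.symm (fun j : Fin n => l j i))
        ∈ Fintype.piFinset (fun i : Fin d =>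
            Finset.finsuppAntidiag (Finset.univ : Finset (Fin n)) (β i)) := by
    intro l hl
    rw [Finset.mem_finsuppAntidiag] at hl
    rw [Fintype.mem_piFinset]
    intro i
    rw [Finset.mem_finsuppAntidiag]
    constructor
    · have := congrArg (fun μ : Fin d →₀ ℕ => μ i) hl.1
      simp only [Finset.sum_apply'] at this
      simpa using this
    · exact Finset.subset_univ _
  calc (Finset.finsuppAntidiag (Finset.univ : Finset (Fin n)) β).card
      ≤ (Fintype.piFinset (fun i : Fin d =>
            Finset.finsuppAntidiag (Finset.univ : Finset (Fin n)) (β i))).card := by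
        refine Finset.card_le_card_of_injOn _ hinj ?_
        intro l hl l' hl' h
        ext j i
        have := congrFun h i
        exact congrFun (Finsupp.equivFunOnFinite.symm.injective this) j
    _ = ∏ i : Fin d, (Finset.finsuppAntidiag (Finset.univ : Finset (Fin n)) (β i)).card :=
        Fintype.card_piFinset _
    _ ≤ ∏ i : Fin d, n ^ (β i) := by
        refine Finset.prod_le_prod (fun _ _ => Nat.zero_le _) fun i _ => ?_
        simpa using card_finsuppAntidiag_nat_le (Finset.univ : Finset (Fin n)) (β i)
    _ = n ^ (∑ i : Fin d, β i) := Finset.prod_pow_eq_pow_sum _ _ _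

lemma mv_coeff_prod {d n : ℕ} (p : Fin n → MvPolynomial (Fin d) ℝ) (β : Fin d →₀ ℕ) :
    MvPolynomial.coeff β (∏ j, p j)
      = ∑ l ∈ Finset.finsuppAntidiag (Finset.univ : Finset (Fin n)) β,
          ∏ j, MvPolynomial.coeff (l j) (p j) := by
  rw [← MvPolynomial.coeff_coe, ← MvPolynomial.coeToMvPowerSeries.ringHom_apply, map_prod]
  simp only [MvPolynomial.coeToMvPowerSeries.ringHom_apply]
  rw [MvPowerSeries.coeff_prod]
  simp [MvPolynomial.coeff_coe]

/-- The coefficient norm `‖p‖ = sqrt (Σ_α c_α²)` of a multivariate polynomial. -/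
noncomputable def mvNorm {d : ℕ} (p : MvPolynomial (Fin d) ℝ) : ℝ :=
  Real.sqrt (∑ α ∈ p.support, (MvPolynomial.coeff α p) ^ 2)

lemma mvNorm_sq {d : ℕ} (q : MvPolynomial (Fin d) ℝ) :
    mvNorm q ^ 2 = ∑ α ∈ q.support, (MvPolynomial.coeff α q) ^ 2 :=
  Real.sq_sqrt (Finset.sum_nonneg fun _ _ => sq_nonneg _)

/-- For multivariate polynomials `p_1, …, p_n` with product `p`,
`‖p‖² ≤ n^{Σ_j deg(p_j)} · Π_j ‖p_j‖²`. -/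
theorem mvNorm_prod_sq_le {d n : ℕ} (p : Fin n → MvPolynomial (Fin d) ℝ) :
    (mvNorm (∏ j, p j)) ^ 2
      ≤ (n : ℝ) ^ (∑ j, (p j).totalDegree) * ∏ j, (mvNorm (p j)) ^ 2 := by

  classical
  rcases Nat.eq_zero_or_pos n with hn | hn
  · subst hn
    simp only [Finset.univ_eq_empty, Finset.prod_empty, Finset.sum_empty, pow_zero, one_mul]
    rw [mvNorm_sq]
    have hsub : (1 : MvPolynomial (Fin d) ℝ).support ⊆ {0} := by
      intro α hα
      rw [MvPolynomial.mem_support_iff, MvPolynomial.coeff_one] at hα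
      rcases eq_or_ne (0 : Fin d →₀ ℕ) α with h | h
      · simp [← h]
      · simp [h] at hα
    calc ∑ α ∈ (1 : MvPolynomial (Fin d) ℝ).support, MvPolynomial.coeff α 1 ^ 2
        ≤ ∑ α ∈ ({0} : Finset (Fin d →₀ ℕ)), MvPolynomial.coeff α (1 : MvPolynomial (Fin d) ℝ) ^ 2 :=
          Finset.sum_le_sum_of_subset_of_nonneg hsub fun _ _ _ => sq_nonneg _
      _ = 1 := by simp
  · set D := ∑ j, (p j).totalDegree with hD
    set T : (Fin d →₀ ℕ) → Finset (Fin n →₀ (Fin d →₀ ℕ)) :=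
      fun β => (Finset.finsuppAntidiag (Finset.univ : Finset (Fin n)) β).filter
        (fun l => ∀ j, l j ∈ (p j).support) with hT
    have key : ∀ β : Fin d →₀ ℕ, (MvPolynomial.coeff β (∏ j, p j)) ^ 2
        ≤ (n : ℝ) ^ D * ∑ l ∈ T β, ∏ j, MvPolynomial.coeff (l j) (p j) ^ 2 := by
      intro β
      have hcoeff : MvPolynomial.coeff β (∏ j, p j)
          = ∑ l ∈ T β, ∏ j, MvPolynomial.coeff (l j) (p j) := by
        rw [mv_coeff_prod, hT]
        refine (Finset.sum_filter_of_ne fun l hl hne j => ?_).symm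
        exact MvPolynomial.mem_support_iff.2
          (Finset.prod_ne_zero_iff.1 hne j (Finset.mem_univ j))
      have hcard : ((T β).card : ℝ) ≤ (n : ℝ) ^ D := by
        rcases (T β).eq_empty_or_nonempty with he | ⟨l, hl⟩
        · rw [he]; simp
        · have hl' := Finset.mem_filter.1 hl
          have hβ : β = ∑ j, l j := ((Finset.mem_finsuppAntidiag.1 hl'.1).1).symm
          have hdeg : (∑ i : Fin d, β i) ≤ D := by
            calc ∑ i : Fin d, β i = ∑ i : Fin d, ∑ j : Fin n, l j i := by
                  refine Finset.sum_congr rfl fun i _ => ?_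
                  rw [hβ, Finset.sum_apply']
              _ = ∑ j : Fin n, ∑ i : Fin d, l j i := Finset.sum_comm
              _ ≤ D := by
                  refine Finset.sum_le_sum fun j _ => ?_
                  have h := MvPolynomial.le_totalDegree (hl'.2 j)
                  rwa [Finsupp.sum_fintype _ _ fun _ => rfl] at h
          have hc : (T β).card ≤ n ^ D :=
            calc (T β).card
                ≤ (Finset.finsuppAntidiag (Finset.univ : Finset (Fin n)) β).card :=
                  Finset.card_le_card (Finset.filter_subset _ _)
              _ ≤ n ^ (∑ i : Fin d, β i) := card_finsuppAntidiag_le β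
              _ ≤ n ^ D := Nat.pow_le_pow_right hn hdeg
          calc ((T β).card : ℝ) ≤ ((n ^ D : ℕ) : ℝ) := Nat.cast_le.2 hc
            _ = (n : ℝ) ^ D := by push_cast; ring
      calc (MvPolynomial.coeff β (∏ j, p j)) ^ 2
          = (∑ l ∈ T β, ∏ j, MvPolynomial.coeff (l j) (p j)) ^ 2 := by rw [hcoeff]
        _ ≤ ((T β).card : ℝ) * ∑ l ∈ T β, (∏ j, MvPolynomial.coeff (l j) (p j)) ^ 2 :=
            sq_sum_le_card_mul_sum_sq
        _ ≤ (n : ℝ) ^ D * ∑ l ∈ T β, ∏ j, MvPolynomial.coeff (l j) (p j) ^ 2 := by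
            have hrw : ∑ l ∈ T β, ∏ j, MvPolynomial.coeff (l j) (p j) ^ 2
                = ∑ l ∈ T β, (∏ j, MvPolynomial.coeff (l j) (p j)) ^ 2 :=
              Finset.sum_congr rfl fun l _ => Finset.prod_pow _ _ _
            rw [hrw]
            exact mul_le_mul_of_nonneg_right hcard
              (Finset.sum_nonneg fun _ _ => sq_nonneg _)
    rw [mvNorm_sq]
    calc ∑ β ∈ (∏ j, p j).support, MvPolynomial.coeff β (∏ j, p j) ^ 2
        ≤ ∑ β ∈ (∏ j, p j).support,
            (n : ℝ) ^ D * ∑ l ∈ T β, ∏ j, MvPolynomial.coeff (l j) (p j) ^ 2 :=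
          Finset.sum_le_sum fun β _ => key β
      _ = (n : ℝ) ^ D * ∑ β ∈ (∏ j, p j).support,
            ∑ l ∈ T β, ∏ j, MvPolynomial.coeff (l j) (p j) ^ 2 := by rw [Finset.mul_sum]
      _ ≤ (n : ℝ) ^ D * ∏ j, mvNorm (p j) ^ 2 := by
          refine mul_le_mul_of_nonneg_left ?_ (pow_nonneg (Nat.cast_nonneg n) D)
          have hdisj : ((∏ j, p j).support : Set (Fin d →₀ ℕ)).PairwiseDisjoint T := by
            intro β hβ β' hβ' hne
            refine Finset.disjoint_left.2 fun l hl hl' => hne ?_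
            have h1 := (Finset.mem_finsuppAntidiag.1 (Finset.mem_filter.1 hl).1).1
            have h2 := (Finset.mem_finsuppAntidiag.1 (Finset.mem_filter.1 hl').1).1
            rw [← h1, ← h2]
          rw [← Finset.sum_biUnion hdisj]
          set U := (∏ j, p j).support.biUnion T with hU
          let emb : (Fin n →₀ (Fin d →₀ ℕ)) ↪ (Fin n → Fin d →₀ ℕ) :=
            ⟨fun l => ⇑l, DFunLike.coe_injective⟩
          have hsub : U.map emb ⊆ Fintype.piFinset (fun j => (p j).support) := by
            intro F hF
            rw [Finset.mem_map] at hF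
            obtain ⟨l, hl, rfl⟩ := hF
            rw [hU, Finset.mem_biUnion] at hl
            obtain ⟨β, -, hl⟩ := hl
            rw [Fintype.mem_piFinset]
            exact fun j => (Finset.mem_filter.1 hl).2 j
          calc ∑ l ∈ U, ∏ j, MvPolynomial.coeff (l j) (p j) ^ 2
              = ∑ F ∈ U.map emb, ∏ j, MvPolynomial.coeff (F j) (p j) ^ 2 :=
                (Finset.sum_map U emb fun F => ∏ j, MvPolynomial.coeff (F j) (p j) ^ 2).symm
            _ ≤ ∑ F ∈ Fintype.piFinset (fun j => (p j).support),
                  ∏ j, MvPolynomial.coeff (F j) (p j) ^ 2 :=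
                Finset.sum_le_sum_of_subset_of_nonneg hsub
                  fun _ _ _ => Finset.prod_nonneg fun _ _ => sq_nonneg _
            _ = ∏ j, ∑ α ∈ (p j).support, MvPolynomial.coeff α (p j) ^ 2 :=
                (Finset.prod_univ_sum (fun j => (p j).support)
                  (fun j α => MvPolynomial.coeff α (p j) ^ 2)).symm
            _ = ∏ j, mvNorm (p j) ^ 2 :=
                Finset.prod_congr rfl fun j _ => (mvNorm_sq (p j)).symm
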